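/- Exact solution (3-15): let d1 > d2 > 0, set d3 = (d1 + d2)/2 and κ = √(2/(d1 − d2)), let α0 ≠ 0, α1, α2, C1 be real constants with 4·α0·C1 < 1, and set μ = √(1 − 4·α0·C1). Define, for t > 0 and x ∈ ℝ: u(t,x) = (1/(2α0) + (μ/(2α0))·tanh(μt/2))·(α0 + α1·sin(κx)·exp(−d1κ²t) + α2·cos(κx)·exp(−d1κ²t)), v(t,x) = 1 − (1 − 4α0C1)/(2·cosh²(μt/2)·(1 + μ·tanh(μt/2))) − u(t,x), w(t,x) = (exp(−d1κ²t)/α0)·(1 + μ·tanh(μt/2))·(α1·sin(κx) + α2·cos(κx)). Then (u, v, w) satisfies the HGF system (2-3*) (with d3 = (d1 + d2)/2) at every point (t,x) with t > 0. -/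

import Mathlib

open Real

lemma my_congr_deriv {f : ℝ → ℝ} {f' g' x : ℝ} (h : HasDerivAt f f' x) (e : f' = g') :
    HasDerivAt f g' x := e ▸ h

lemma my_hasDerivAt_tanh (x : ℝ) : HasDerivAt Real.tanh (1 - Real.tanh x ^ 2) x := by
  have h := (Real.hasDerivAt_sinh x).div (Real.hasDerivAt_cosh x) (Real.cosh_pos x).ne'
  have hfun : (Real.sinh / Real.cosh) = Real.tanh :=
    funext fun y => (Real.tanh_eq_sinh_div_cosh y).symm
  rw [hfun] at h
  refine my_congr_deriv h ?_
  rw [Real.tanh_eq_sinh_div_cosh]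
  have hc := (Real.cosh_pos x).ne'
  field_simp

lemma cosh_tanh_id (y : ℝ) : Real.cosh y ^ 2 * (1 - Real.tanh y ^ 2) = 1 := by
  have hc := (Real.cosh_pos y).ne'
  rw [Real.tanh_eq_sinh_div_cosh]
  field_simp
  linarith [Real.cosh_sq y]

lemma one_sub_tanh_sq_pos (y : ℝ) : 0 < 1 - Real.tanh y ^ 2 := by
  nlinarith [cosh_tanh_id y, Real.cosh_pos y, mul_pos (Real.cosh_pos y) (Real.cosh_pos y)]

lemma my_tanh_nonneg {y : ℝ} (h : 0 ≤ y) : 0 ≤ Real.tanh y := by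
  rw [Real.tanh_eq_sinh_div_cosh]
  exact div_nonneg (Real.sinh_nonneg_iff.mpr h) (Real.cosh_pos y).le

lemma trig_d (κ a b c : ℝ) :
    deriv (fun z => a + b * Real.sin (κ * z) + c * Real.cos (κ * z))
      = fun y => b * κ * Real.cos (κ * y) - c * κ * Real.sin (κ * y) := by
  funext y
  have hk : HasDerivAt (fun z : ℝ => κ * z) κ y := by
    simpa using (hasDerivAt_id y).const_mul κ
  have hs : HasDerivAt (fun z => Real.sin (κ * z)) (Real.cos (κ * y) * κ) y := by
    simpa [Function.comp_def] using (Real.hasDerivAt_sin (κ * y)).comp y hk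
  have hc : HasDerivAt (fun z => Real.cos (κ * z)) (-Real.sin (κ * y) * κ) y := by
    simpa [Function.comp_def] using (Real.hasDerivAt_cos (κ * y)).comp y hk
  have h := ((hasDerivAt_const y a).add (hs.const_mul b)).add (hc.const_mul c)
  exact h.deriv.trans (by ring)

lemma trig_dd (κ a b c x : ℝ) :
    deriv (fun y => deriv (fun z => a + b * Real.sin (κ * z) + c * Real.cos (κ * z)) y) x
      = -κ ^ 2 * (b * Real.sin (κ * x) + c * Real.cos (κ * x)) := by
  simp only [trig_d]
  have h : (fun y => b * κ * Real.cos (κ * y) - c * κ * Real.sin (κ * y))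
      = fun y => (0 : ℝ) + (-(c * κ)) * Real.sin (κ * y) + (b * κ) * Real.cos (κ * y) :=
    funext fun y => by ring
  rw [h, congrFun (trig_d κ 0 (-(c * κ)) (b * κ)) x]
  ring

set_option maxHeartbeats 4000000 in
/-- Exact solution (3-15) of the HGF system (2-3*) with d3 = (d1 + d2)/2. -/
theorem hgf_exact_solution_3_15
    (d1 d2 : ℝ) (hd2 : 0 < d2) (hd12 : d2 < d1)
    (d3 : ℝ) (hd3 : d3 = (d1 + d2) / 2)
    (κ : ℝ) (hκ : κ = Real.sqrt (2 / (d1 - d2)))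
    (α0 α1 α2 C1 : ℝ) (hα0 : α0 ≠ 0) (hC1 : 4 * α0 * C1 < 1)
    (μ : ℝ) (hμ : μ = Real.sqrt (1 - 4 * α0 * C1))
    (u v w : ℝ → ℝ → ℝ)
    (hu : ∀ t x : ℝ, u t x = (1 / (2 * α0) + (μ / (2 * α0)) * Real.tanh (μ * t / 2))
        * (α0 + α1 * Real.sin (κ * x) * Real.exp (-d1 * κ ^ 2 * t)
          + α2 * Real.cos (κ * x) * Real.exp (-d1 * κ ^ 2 * t)))
    (hv : ∀ t x : ℝ, v t x = 1 - (1 - 4 * α0 * C1)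
        / (2 * (Real.cosh (μ * t / 2)) ^ 2 * (1 + μ * Real.tanh (μ * t / 2))) - u t x)
    (hw : ∀ t x : ℝ, w t x = (Real.exp (-d1 * κ ^ 2 * t) / α0)
        * (1 + μ * Real.tanh (μ * t / 2))
        * (α1 * Real.sin (κ * x) + α2 * Real.cos (κ * x))) :
    ∀ t x : ℝ, 0 < t →
      deriv (fun s => u s x) t
        = d1 * deriv (fun y => deriv (fun z => u t z) y) x
          + u t x * (1 - u t x - v t x) ∧
      deriv (fun s => v s x) t
        = d2 * deriv (fun y => deriv (fun z => v t z) y) x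
          + ((d2 - d3) / (d1 - d3)) * (v t x * (1 - u t x - v t x))
          + u t x * w t x + v t x * w t x ∧
      deriv (fun s => w s x) t
        = d3 * deriv (fun y => deriv (fun z => w t z) y) x
          - u t x * w t x - v t x * w t x := by
  intro t x ht
  have hμ0 : 0 ≤ μ := hμ ▸ Real.sqrt_nonneg _
  have hμ2 : μ ^ 2 = 1 - 4 * α0 * C1 := by
    rw [hμ]; exact Real.sq_sqrt (by linarith)
  have hdpos : (0:ℝ) < d1 - d2 := by linarith
  have hdne : d1 - d2 ≠ 0 := hdpos.ne'
  have hκ2 : κ ^ 2 = 2 / (d1 - d2) := by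
    rw [hκ]; exact Real.sq_sqrt (by positivity)
  have hT0 : 0 ≤ Real.tanh (μ * t / 2) := my_tanh_nonneg (by positivity)
  have hPpos : 0 < 1 + μ * Real.tanh (μ * t / 2) := by nlinarith [mul_nonneg hμ0 hT0]
  have hPne : (1 + μ * Real.tanh (μ * t / 2)) ≠ 0 := hPpos.ne'
  have hDne : (2 * (1 + μ * Real.tanh (μ * t / 2))) ≠ 0 := by positivity
  -- rewrite the cosh² quotient in terms of tanh
  have hvv : ∀ s : ℝ, (1 - 4 * α0 * C1)
      / (2 * Real.cosh (μ * s / 2) ^ 2 * (1 + μ * Real.tanh (μ * s / 2)))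
      = μ ^ 2 * (1 - Real.tanh (μ * s / 2) ^ 2) / (2 * (1 + μ * Real.tanh (μ * s / 2))) := by
    intro s
    have h1 := one_sub_tanh_sq_pos (μ * s / 2)
    have h2 : Real.cosh (μ * s / 2) ^ 2 = 1 / (1 - Real.tanh (μ * s / 2) ^ 2) := by
      rw [eq_div_iff h1.ne']; exact cosh_tanh_id _
    rw [h2, ← hμ2,
      show (2:ℝ) * (1 / (1 - Real.tanh (μ * s / 2) ^ 2)) * (1 + μ * Real.tanh (μ * s / 2))
        = 2 * (1 + μ * Real.tanh (μ * s / 2)) / (1 - Real.tanh (μ * s / 2) ^ 2) from by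
          field_simp,
      div_div_eq_mul_div]
  -- basic time derivatives
  have hlin : HasDerivAt (fun s : ℝ => μ * s / 2) (μ / 2) t := by
    simpa using ((hasDerivAt_id t).const_mul μ).div_const 2
  have hTt : HasDerivAt (fun s => Real.tanh (μ * s / 2))
      ((1 - Real.tanh (μ * t / 2) ^ 2) * (μ / 2)) t := by
    simpa [Function.comp_def] using (my_hasDerivAt_tanh (μ * t / 2)).comp t hlin
  have hEt : HasDerivAt (fun s => Real.exp (-d1 * κ ^ 2 * s))
      (Real.exp (-d1 * κ ^ 2 * t) * (-d1 * κ ^ 2)) t := by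
    have h1 : HasDerivAt (fun s : ℝ => -d1 * κ ^ 2 * s) (-d1 * κ ^ 2 * 1) t :=
      (hasDerivAt_id t).const_mul (-d1 * κ ^ 2)
    exact my_congr_deriv h1.exp (by ring)
  have hA : HasDerivAt (fun s => 1 / (2 * α0) + (μ / (2 * α0)) * Real.tanh (μ * s / 2))
      ((μ / (2 * α0)) * ((1 - Real.tanh (μ * t / 2) ^ 2) * (μ / 2))) t :=
    (hTt.const_mul (μ / (2 * α0))).const_add (1 / (2 * α0))
  have hB : HasDerivAt (fun s => α0 + α1 * Real.sin (κ * x) * Real.exp (-d1 * κ ^ 2 * s)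
      + α2 * Real.cos (κ * x) * Real.exp (-d1 * κ ^ 2 * s))
      (0 + α1 * Real.sin (κ * x) * (Real.exp (-d1 * κ ^ 2 * t) * (-d1 * κ ^ 2))
        + α2 * Real.cos (κ * x) * (Real.exp (-d1 * κ ^ 2 * t) * (-d1 * κ ^ 2))) t :=
    ((hasDerivAt_const t α0).add (hEt.const_mul (α1 * Real.sin (κ * x)))).add
      (hEt.const_mul (α2 * Real.cos (κ * x)))
  -- time derivative of u
  have hufun : (fun s => u s x) = fun s =>
      (1 / (2 * α0) + (μ / (2 * α0)) * Real.tanh (μ * s / 2))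
        * (α0 + α1 * Real.sin (κ * x) * Real.exp (-d1 * κ ^ 2 * s)
          + α2 * Real.cos (κ * x) * Real.exp (-d1 * κ ^ 2 * s)) :=
    funext fun s => hu s x
  have hut : HasDerivAt (fun s => u s x)
      ((μ / (2 * α0)) * ((1 - Real.tanh (μ * t / 2) ^ 2) * (μ / 2))
          * (α0 + α1 * Real.sin (κ * x) * Real.exp (-d1 * κ ^ 2 * t)
            + α2 * Real.cos (κ * x) * Real.exp (-d1 * κ ^ 2 * t))
        + (1 / (2 * α0) + (μ / (2 * α0)) * Real.tanh (μ * t / 2))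
          * ((α1 * Real.sin (κ * x) + α2 * Real.cos (κ * x))
            * Real.exp (-d1 * κ ^ 2 * t) * (-d1 * κ ^ 2))) t := by
    rw [hufun]; exact my_congr_deriv (hA.mul hB) (by ring)
  -- time derivative of v
  have hvfun : (fun s => v s x) = fun s =>
      1 - μ ^ 2 * (1 - Real.tanh (μ * s / 2) ^ 2) / (2 * (1 + μ * Real.tanh (μ * s / 2)))
        - (1 / (2 * α0) + (μ / (2 * α0)) * Real.tanh (μ * s / 2))
          * (α0 + α1 * Real.sin (κ * x) * Real.exp (-d1 * κ ^ 2 * s)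
            + α2 * Real.cos (κ * x) * Real.exp (-d1 * κ ^ 2 * s)) :=
    funext fun s => by rw [hv, hvv s, hu]
  have hn : HasDerivAt (fun s => μ ^ 2 * (1 - Real.tanh (μ * s / 2) ^ 2))
      (μ ^ 2 * -(2 * Real.tanh (μ * t / 2) * ((1 - Real.tanh (μ * t / 2) ^ 2) * (μ / 2)))) t :=
    my_congr_deriv (((hTt.pow 2).const_sub 1).const_mul (μ ^ 2)) (by push_cast; ring)
  have hD : HasDerivAt (fun s => 2 * (1 + μ * Real.tanh (μ * s / 2)))
      (2 * (μ * ((1 - Real.tanh (μ * t / 2) ^ 2) * (μ / 2)))) t :=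
    my_congr_deriv (((hTt.const_mul μ).const_add 1).const_mul 2) (by ring)
  have hvt : HasDerivAt (fun s => v s x)
      (-((μ ^ 2 * -(2 * Real.tanh (μ * t / 2) * ((1 - Real.tanh (μ * t / 2) ^ 2) * (μ / 2)))
            * (2 * (1 + μ * Real.tanh (μ * t / 2)))
          - μ ^ 2 * (1 - Real.tanh (μ * t / 2) ^ 2)
            * (2 * (μ * ((1 - Real.tanh (μ * t / 2) ^ 2) * (μ / 2)))))
          / (2 * (1 + μ * Real.tanh (μ * t / 2))) ^ 2)
        - ((μ / (2 * α0)) * ((1 - Real.tanh (μ * t / 2) ^ 2) * (μ / 2))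
          * (α0 + α1 * Real.sin (κ * x) * Real.exp (-d1 * κ ^ 2 * t)
            + α2 * Real.cos (κ * x) * Real.exp (-d1 * κ ^ 2 * t))
        + (1 / (2 * α0) + (μ / (2 * α0)) * Real.tanh (μ * t / 2))
          * ((α1 * Real.sin (κ * x) + α2 * Real.cos (κ * x))
            * Real.exp (-d1 * κ ^ 2 * t) * (-d1 * κ ^ 2)))) t := by
    rw [hvfun]
    exact my_congr_deriv (((hn.div hD hDne).const_sub 1).sub (hA.mul hB)) (by ring)
  -- time derivative of w
  have hwfun : (fun s => w s x) = fun s =>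
      Real.exp (-d1 * κ ^ 2 * s) / α0 * (1 + μ * Real.tanh (μ * s / 2))
        * (α1 * Real.sin (κ * x) + α2 * Real.cos (κ * x)) :=
    funext fun s => hw s x
  have hwt : HasDerivAt (fun s => w s x)
      ((Real.exp (-d1 * κ ^ 2 * t) * -(d1 * κ ^ 2) / α0 * (1 + μ * Real.tanh (μ * t / 2))
        + Real.exp (-d1 * κ ^ 2 * t) / α0 * (μ * ((1 - Real.tanh (μ * t / 2) ^ 2) * (μ / 2))))
        * (α1 * Real.sin (κ * x) + α2 * Real.cos (κ * x))) t := by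
    rw [hwfun]
    exact my_congr_deriv (((hEt.div_const α0).mul ((hTt.const_mul μ).const_add 1)).mul_const
      (α1 * Real.sin (κ * x) + α2 * Real.cos (κ * x))) (by ring)
  -- second space derivatives
  have hux : (fun z => u t z) = fun z =>
      (1 / (2 * α0) + (μ / (2 * α0)) * Real.tanh (μ * t / 2)) * α0
        + (1 / (2 * α0) + (μ / (2 * α0)) * Real.tanh (μ * t / 2)) * α1
            * Real.exp (-d1 * κ ^ 2 * t) * Real.sin (κ * z)
        + (1 / (2 * α0) + (μ / (2 * α0)) * Real.tanh (μ * t / 2)) * α2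
            * Real.exp (-d1 * κ ^ 2 * t) * Real.cos (κ * z) :=
    funext fun z => by rw [hu]; ring
  have hdux : deriv (fun y => deriv (fun z => u t z) y) x
      = -κ ^ 2 * ((1 / (2 * α0) + (μ / (2 * α0)) * Real.tanh (μ * t / 2)) * α1
            * Real.exp (-d1 * κ ^ 2 * t) * Real.sin (κ * x)
        + (1 / (2 * α0) + (μ / (2 * α0)) * Real.tanh (μ * t / 2)) * α2
            * Real.exp (-d1 * κ ^ 2 * t) * Real.cos (κ * x)) := by
    rw [hux]; exact trig_dd κ _ _ _ x
  have hvx : (fun z => v t z) = fun z =>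
      (1 - (1 - 4 * α0 * C1)
          / (2 * Real.cosh (μ * t / 2) ^ 2 * (1 + μ * Real.tanh (μ * t / 2)))
        - (1 / (2 * α0) + (μ / (2 * α0)) * Real.tanh (μ * t / 2)) * α0)
        + (-((1 / (2 * α0) + (μ / (2 * α0)) * Real.tanh (μ * t / 2)) * α1
            * Real.exp (-d1 * κ ^ 2 * t))) * Real.sin (κ * z)
        + (-((1 / (2 * α0) + (μ / (2 * α0)) * Real.tanh (μ * t / 2)) * α2
            * Real.exp (-d1 * κ ^ 2 * t))) * Real.cos (κ * z) :=
    funext fun z => by rw [hv, hu]; ring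
  have hdvx : deriv (fun y => deriv (fun z => v t z) y) x
      = -κ ^ 2 * ((-((1 / (2 * α0) + (μ / (2 * α0)) * Real.tanh (μ * t / 2)) * α1
            * Real.exp (-d1 * κ ^ 2 * t))) * Real.sin (κ * x)
        + (-((1 / (2 * α0) + (μ / (2 * α0)) * Real.tanh (μ * t / 2)) * α2
            * Real.exp (-d1 * κ ^ 2 * t))) * Real.cos (κ * x)) := by
    rw [hvx]; exact trig_dd κ _ _ _ x
  have hwx : (fun z => w t z) = fun z =>
      (0:ℝ) + (Real.exp (-d1 * κ ^ 2 * t) / α0 * (1 + μ * Real.tanh (μ * t / 2)) * α1)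
          * Real.sin (κ * z)
        + (Real.exp (-d1 * κ ^ 2 * t) / α0 * (1 + μ * Real.tanh (μ * t / 2)) * α2)
          * Real.cos (κ * z) :=
    funext fun z => by rw [hw]; ring
  have hdwx : deriv (fun y => deriv (fun z => w t z) y) x
      = -κ ^ 2 * ((Real.exp (-d1 * κ ^ 2 * t) / α0 * (1 + μ * Real.tanh (μ * t / 2)) * α1)
          * Real.sin (κ * x)
        + (Real.exp (-d1 * κ ^ 2 * t) / α0 * (1 + μ * Real.tanh (μ * t / 2)) * α2)
          * Real.cos (κ * x)) := by
    rw [hwx]; exact trig_dd κ _ _ _ x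
  have h13 : d1 - (d1 + d2) / 2 ≠ 0 := sub_ne_zero.mpr (by intro h; linarith)
  have hratio : (d2 - d3) / (d1 - d3) = -1 := by
    rw [hd3, div_eq_iff h13]; ring
  refine ⟨?_, ?_, ?_⟩
  · rw [hut.deriv, hdux, hv t x, hu t x, hvv t, hκ2]
    field_simp
    ring
  · rw [hvt.deriv, hdvx, hratio, hv t x, hu t x, hw t x, hvv t, hκ2]
    field_simp
    ring
  · rw [hwt.deriv, hdwx, hd3, hv t x, hu t x, hw t x, hvv t, hκ2]
    have hPne' : 1 + μ * Real.tanh (t * μ / 2) ≠ 0 := by rw [mul_comm t]; exact hPne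
    field_simp
    ring
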